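/- Fix an integer p ≥ 2 and a real number 0 ≤ α ≤ p−1. Then lim_{n→∞} (log card W([αn],n))/(n log p) = h(α), where W([αn],n) is the set of words in {0,…,p−1}^n with digit sum equal to the integer part [αn] of αn. -/

import Mathlib

open Filter MeasureTheory Set
open scoped ENNReal

noncomputable section

/-- Number of words of length `n` over the alphabet `{0, …, p-1}` whose digit sum lies
strictly between `n(α-δ)` and `n(α+δ)`; this is `h(α,n,δ)`. -/
def hcount (p n : ℕ) (α δ : ℝ) : ℕ :=
  Nat.card {w : Fin n → Fin p //
    (n : ℝ) * (α - δ) < ∑ i, ((w i : ℕ) : ℝ) ∧ (∑ i, ((w i : ℕ) : ℝ)) < n * (α + δ)}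

/-- The `p`-adic entropy function
`h(α) = lim_{δ→0} limsup_{n→∞} log h(α,n,δ) / (n log p)`.
Since the inner quantity is nondecreasing in `δ`, the limit as `δ → 0⁺` equals the
infimum over `δ > 0`. -/
def entropy (p : ℕ) (α : ℝ) : ℝ :=
  ⨅ δ : {δ : ℝ // 0 < δ},
    limsup (fun n : ℕ => Real.log (hcount p n α δ) / (n * Real.log p)) atTop

/-- Number of words of length `n` over `{0, …, p-1}` with digit sum `< n(α+δ)`;
this is `h̄(α,n,δ)`. -/
def hbarCount (p n : ℕ) (α δ : ℝ) : ℕ :=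
  Nat.card {w : Fin n → Fin p // (∑ i, ((w i : ℕ) : ℝ)) < n * (α + δ)}

/-- The `p`-adic upper entropy function
`h̄(α) = lim_{δ→0} limsup_{n→∞} log h̄(α,n,δ) / (n log p)`, the limit in `δ`
being the infimum over `δ > 0` by monotonicity in `δ`. -/
def upperEntropy (p : ℕ) (α : ℝ) : ℝ :=
  ⨅ δ : {δ : ℝ // 0 < δ},
    limsup (fun n : ℕ => Real.log (hbarCount p n α δ) / (n * Real.log p)) atTop

/-- Number of words of length `n` over `{0, …, p-1}` with digit sum `> n(α-δ)`;
this is `h̲(α,n,δ)`. -/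
def hlowCount (p n : ℕ) (α δ : ℝ) : ℕ :=
  Nat.card {w : Fin n → Fin p // (n : ℝ) * (α - δ) < ∑ i, ((w i : ℕ) : ℝ)}

/-- The `p`-adic lower entropy function
`h̲(α) = lim_{δ→0} liminf_{n→∞} log h̲(α,n,δ) / (n log p)`, the limit in `δ`
being the infimum over `δ > 0` by monotonicity in `δ`. -/
def lowerEntropy (p : ℕ) (α : ℝ) : ℝ :=
  ⨅ δ : {δ : ℝ // 0 < δ},
    liminf (fun n : ℕ => Real.log (hlowCount p n α δ) / (n * Real.log p)) atTop

/-- The `(n+1)`-th digit `x_{n+1} ∈ {0,…,p-1}` of the non-terminating `p`-adic expansion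
`x = 0.x₁x₂x₃…` of `x ∈ [0,1]` (the expansion not ending in all zeros). -/
def padicDigit (p : ℕ) (x : ℝ) (n : ℕ) : ℤ :=
  (⌈x * p ^ (n + 1)⌉ - 1) - p * (⌈x * p ^ n⌉ - 1)

/-- `S_n(T^m x) = x_{m+1} + ⋯ + x_{m+n}`, the digit sum of length `n` after shifting
`m` times. In particular `msum p x 0 n = S_n(x)`. -/
def msum (p : ℕ) (x : ℝ) (m n : ℕ) : ℤ :=
  ∑ i ∈ Finset.range n, padicDigit p x (m + i)

/-- The `n`-th lower moving digit mean `M̲ₙ(x) = liminf_{m→∞} S_n(T^m x)/n`. -/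
def lowerMn (p : ℕ) (x : ℝ) (n : ℕ) : ℝ :=
  liminf (fun m : ℕ => (msum p x m n : ℝ) / n) atTop

/-- The `n`-th upper moving digit mean `M̄ₙ(x) = limsup_{m→∞} S_n(T^m x)/n`. -/
def upperMn (p : ℕ) (x : ℝ) (n : ℕ) : ℝ :=
  limsup (fun m : ℕ => (msum p x m n : ℝ) / n) atTop

/-- The lower moving digit mean `M̲(x) = lim_{n→∞} M̲ₙ(x)`; the limit exists by
subadditivity, hence equals the `liminf`. -/
def lowerM (p : ℕ) (x : ℝ) : ℝ := liminf (fun n : ℕ => lowerMn p x n) atTop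

/-- The upper moving digit mean `M̄(x) = lim_{n→∞} M̄ₙ(x)`; the limit exists by
subadditivity, hence equals the `limsup`. -/
def upperM (p : ℕ) (x : ℝ) : ℝ := limsup (fun n : ℕ => upperMn p x n) atTop

/-- The lower digit mean `A̲(x) = liminf_{n→∞} S_n(x)/n`. -/
def lowerA (p : ℕ) (x : ℝ) : ℝ := liminf (fun n : ℕ => (msum p x 0 n : ℝ) / n) atTop

/-- The upper digit mean `Ā(x) = limsup_{n→∞} S_n(x)/n`. -/
def upperA (p : ℕ) (x : ℝ) : ℝ := limsup (fun n : ℕ => (msum p x 0 n : ℝ) / n) atTop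

/-- The Banach set `B(α,β) = {x ∈ [0,1] : M̲(x) = α, M̄(x) = β}`. -/
def BanachSet (p : ℕ) (α β : ℝ) : Set ℝ :=
  {x | x ∈ Icc (0 : ℝ) 1 ∧ lowerM p x = α ∧ upperM p x = β}

/-- `ω(α,n) = card W([αn],n)`: the number of words of length `n` over `{0,…,p-1}` with
digit sum equal to the integer part of `αn`. -/
def omegaCount (p : ℕ) (α : ℝ) (n : ℕ) : ℕ :=
  Nat.card {w : Fin n → Fin p // (∑ i, ((w i : ℕ) : ℤ)) = ⌊α * n⌋}

namespace PadicAux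
open Topology

def cword (p n : ℕ) (P : ℤ) : ℕ :=
  Nat.card {w : Fin n → Fin p // ∑ i, ((w i : ℕ) : ℤ) = P}

lemma card_le_of_imp {p n : ℕ} {P Q : (Fin n → Fin p) → Prop} (h : ∀ w, P w → Q w) :
    Nat.card {w // P w} ≤ Nat.card {w // Q w} :=
  Nat.card_le_card_of_injective (fun x => ⟨x.1, h x.1 x.2⟩)
    (by intro a b hab; simp only [Subtype.mk.injEq] at hab; exact Subtype.ext hab)

lemma card_subtype_le_pow {p n : ℕ} (P : (Fin n → Fin p) → Prop) :
    Nat.card {w // P w} ≤ p ^ n := by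
  have := Nat.card_le_card_of_injective (fun x : {w // P w} => x.1)
    (fun a b hab => Subtype.ext hab)
  simpa [Nat.card_eq_fintype_card, Fintype.card_fun] using this

lemma exists_word {p : ℕ} (hp : 2 ≤ p) :
    ∀ (n : ℕ) (P : ℤ), 0 ≤ P → P ≤ ((p : ℤ) - 1) * n →
      ∃ w : Fin n → Fin p, ∑ i, ((w i : ℕ) : ℤ) = P := by
  intro n
  induction n with
  | zero =>
    intro P h0 h1
    refine ⟨Fin.elim0, ?_⟩
    simp only [Nat.cast_zero, mul_zero] at h1
    simp only [Finset.univ_eq_empty, Finset.sum_empty]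
    omega
  | succ n ih =>
    intro P h0 h1
    have hn1 : ((n:ℤ) + 1) = ((n + 1 : ℕ) : ℤ) := by push_cast; ring
    rcases le_total P ((p : ℤ) - 1) with hc | hc
    · obtain ⟨w, hw⟩ := ih 0 le_rfl (mul_nonneg (by omega) (by omega))
      refine ⟨Fin.cons ⟨P.toNat, by omega⟩ w, ?_⟩
      rw [Fin.sum_univ_succ]
      simp only [Fin.cons_zero, Fin.cons_succ]
      rw [hw]
      simp only [add_zero]
      omega
    · obtain ⟨w, hw⟩ := ih (P - ((p : ℤ) - 1)) (by omega) (by push_cast at h1 ⊢; linarith)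
      refine ⟨Fin.cons ⟨p - 1, by omega⟩ w, ?_⟩
      rw [Fin.sum_univ_succ]
      simp only [Fin.cons_zero, Fin.cons_succ]
      rw [hw]
      omega

lemma one_le_cword {p : ℕ} (hp : 2 ≤ p) {n : ℕ} {P : ℤ} (h0 : 0 ≤ P)
    (h1 : P ≤ ((p : ℤ) - 1) * n) : 1 ≤ cword p n P := by
  obtain ⟨w, hw⟩ := exists_word hp n P h0 h1
  have : Nonempty {w : Fin n → Fin p // ∑ i, ((w i : ℕ) : ℤ) = P} := ⟨⟨w, hw⟩⟩
  exact Nat.card_pos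

lemma cword_mul_cword_le (p n m : ℕ) (P Q : ℤ) :
    cword p n P * cword p m Q ≤ cword p (n + m) (P + Q) := by
  rw [cword, cword, cword, ← Nat.card_prod]
  refine Nat.card_le_card_of_injective (fun x => ⟨Fin.append x.1.1 x.2.1, ?_⟩) ?_
  · rw [Fin.sum_univ_add]
    simp only [Fin.append_left, Fin.append_right]
    rw [x.1.2, x.2.2]
  · rintro ⟨⟨u, hu⟩, ⟨v, hv⟩⟩ ⟨⟨u', hu'⟩, ⟨v', hv'⟩⟩ h
    simp only [Subtype.mk.injEq] at h
    have h1 : u = u' := by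
      funext i
      have := congrFun h (Fin.castAdd m i)
      simpa [Fin.append_left] using this
    have h2 : v = v' := by
      funext i
      have := congrFun h (Fin.natAdd n i)
      simpa [Fin.append_right] using this
    simp [Prod.ext_iff, Subtype.ext_iff, h1, h2]

lemma omegaCount_eq_cword (p : ℕ) (α : ℝ) (n : ℕ) :
    omegaCount p α n = cword p n ⌊α * n⌋ := rfl

lemma floor_le_aux {p : ℕ} {α : ℝ} (hα : 0 ≤ α) (hα' : α ≤ (p : ℝ) - 1) (n : ℕ) :
    ⌊α * (n : ℝ)⌋ ≤ ((p : ℤ) - 1) * n := by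
  have h : α * (n : ℝ) ≤ ((p : ℝ) - 1) * n :=
    mul_le_mul_of_nonneg_right hα' (Nat.cast_nonneg n)
  calc ⌊α * (n : ℝ)⌋ ≤ ⌊((p : ℝ) - 1) * (n : ℝ)⌋ := Int.floor_le_floor h
    _ = ((p : ℤ) - 1) * n := by
        rw [show ((p : ℝ) - 1) * (n : ℝ) = ((((p : ℤ) - 1) * n : ℤ) : ℝ) by push_cast; ring,
          Int.floor_intCast]

lemma floor_nonneg_aux {α : ℝ} (hα : 0 ≤ α) (n : ℕ) : 0 ≤ ⌊α * (n : ℝ)⌋ :=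
  Int.floor_nonneg.mpr (mul_nonneg hα (Nat.cast_nonneg n))

lemma one_le_omegaCount {p : ℕ} (hp : 2 ≤ p) {α : ℝ} (hα : 0 ≤ α)
    (hα' : α ≤ (p : ℝ) - 1) (n : ℕ) : 1 ≤ omegaCount p α n := by
  rw [omegaCount_eq_cword]
  exact one_le_cword hp (floor_nonneg_aux hα n) (floor_le_aux hα hα' n)

lemma omegaCount_le_pow (p : ℕ) (α : ℝ) (n : ℕ) : omegaCount p α n ≤ p ^ n :=
  card_subtype_le_pow _

lemma log_nat_nonneg (m : ℕ) : 0 ≤ Real.log m := by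
  cases m with
  | zero => simp
  | succ k => exact Real.log_nonneg (by exact_mod_cast Nat.succ_le_succ (Nat.zero_le k))

lemma log_nat_le {a b : ℕ} (h : a ≤ b) : Real.log a ≤ Real.log b := by
  cases a with
  | zero => simpa using log_nat_nonneg b
  | succ k =>
    exact Real.log_le_log (by exact_mod_cast Nat.succ_pos k) (by exact_mod_cast h)

lemma omegaCount_mono {p : ℕ} (hp : 2 ≤ p) {α : ℝ} (hα : 0 ≤ α)
    (hα' : α ≤ (p : ℝ) - 1) : Monotone (omegaCount p α) := by
  apply monotone_nat_of_le_succ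
  intro n
  set g : ℤ := ⌊α * ((n + 1 : ℕ) : ℝ)⌋ - ⌊α * (n : ℝ)⌋ with hgdef
  have hcast : ((n + 1 : ℕ) : ℝ) = (n : ℝ) + 1 := by push_cast; ring
  have hg0 : 0 ≤ g := by
    have : α * (n : ℝ) ≤ α * ((n + 1 : ℕ) : ℝ) := by
      rw [hcast]; nlinarith
    have := Int.floor_le_floor this
    omega
  have hg1 : g ≤ ((p : ℤ) - 1) * 1 := by
    have h2 : α * (n : ℝ) - 1 < (⌊α * (n : ℝ)⌋ : ℝ) := Int.sub_one_lt_floor _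
    have hreal : (g : ℝ) < (p : ℝ) := by
      rw [hgdef]
      push_cast
      have h1 : (⌊α * ((n : ℝ) + 1)⌋ : ℝ) ≤ α * ((n : ℝ) + 1) := Int.floor_le _
      nlinarith
    have : g < (p : ℤ) := by exact_mod_cast hreal
    omega
  calc omegaCount p α n = omegaCount p α n * 1 := (mul_one _).symm
    _ ≤ cword p n ⌊α * (n : ℝ)⌋ * cword p 1 g := by
        rw [omegaCount_eq_cword]
        exact Nat.mul_le_mul_left _ (one_le_cword hp hg0 (by simpa using hg1))
    _ ≤ cword p (n + 1) (⌊α * (n : ℝ)⌋ + g) := cword_mul_cword_le p n 1 _ _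
    _ = omegaCount p α (n + 1) := by
        rw [omegaCount_eq_cword]
        congr 1
        omega

lemma omegaCount_superadd {p : ℕ} (hp : 2 ≤ p) {α : ℝ} (hα : 0 ≤ α) {k : ℕ}
    (hk : (2 : ℝ) ≤ (k : ℝ) * ((p : ℝ) - 1 - α)) (n m : ℕ) :
    omegaCount p α n * omegaCount p α m ≤ omegaCount p α (n + m + k) := by
  set g : ℤ := ⌊α * ((n + m + k : ℕ) : ℝ)⌋ - ⌊α * (n : ℝ)⌋ - ⌊α * (m : ℝ)⌋ with hgdef
  have hcast : ((n + m + k : ℕ) : ℝ) = (n : ℝ) + m + k := by push_cast; ring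
  have hfn := Int.floor_le (α * (n : ℝ))
  have hfm := Int.floor_le (α * (m : ℝ))
  have hfn' := Int.sub_one_lt_floor (α * (n : ℝ))
  have hfm' := Int.sub_one_lt_floor (α * (m : ℝ))
  have hαk : 0 ≤ α * (k : ℝ) := mul_nonneg hα (Nat.cast_nonneg k)
  have hg0 : 0 ≤ g := by
    have h1 : ((⌊α * (n : ℝ)⌋ + ⌊α * (m : ℝ)⌋ : ℤ) : ℝ) ≤ α * ((n + m + k : ℕ) : ℝ) := by
      rw [hcast]; push_cast; nlinarith
    have := Int.le_floor.mpr h1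
    omega
  have hg1 : g ≤ ((p : ℤ) - 1) * k := by
    have hreal : (g : ℝ) < (((p : ℤ) - 1) * k : ℤ) := by
      rw [hgdef]
      push_cast
      have h1 : (⌊α * ((n : ℝ) + m + k)⌋ : ℝ) ≤ α * ((n : ℝ) + m + k) := Int.floor_le _
      nlinarith
    have : g < ((p : ℤ) - 1) * k := by exact_mod_cast hreal
    omega
  calc omegaCount p α n * omegaCount p α m
      = omegaCount p α n * omegaCount p α m * 1 := (mul_one _).symm
    _ ≤ cword p (n + m) (⌊α * (n : ℝ)⌋ + ⌊α * (m : ℝ)⌋) * cword p k g := by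
        rw [omegaCount_eq_cword, omegaCount_eq_cword]
        exact Nat.mul_le_mul (cword_mul_cword_le p n m _ _) (one_le_cword hp hg0 hg1)
    _ ≤ cword p (n + m + k) (⌊α * (n : ℝ)⌋ + ⌊α * (m : ℝ)⌋ + g) := cword_mul_cword_le p (n + m) k _ _
    _ = omegaCount p α (n + m + k) := by
        rw [omegaCount_eq_cword]
        congr 1
        omega

lemma omega_tendsto {p : ℕ} (hp : 2 ≤ p) {α : ℝ} (hα : 0 ≤ α)
    (hα' : α ≤ (p : ℝ) - 1) (hlt : α < (p : ℝ) - 1) :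
    ∃ C : ℝ, 0 ≤ C ∧ C ≤ 1 ∧
      Tendsto (fun n : ℕ => Real.log (omegaCount p α n) / ((n : ℝ) * Real.log p)) atTop (𝓝 C) := by
  have hp1 : (1 : ℝ) < p := by exact_mod_cast (by omega : 2 ≤ p).trans_lt' (by omega)
  have hlogp : 0 < Real.log p := Real.log_pos hp1
  have hd : 0 < (p : ℝ) - 1 - α := by linarith
  set k : ℕ := ⌈2 / ((p : ℝ) - 1 - α)⌉₊ + 1 with hkdef
  have hk : (2 : ℝ) ≤ (k : ℝ) * ((p : ℝ) - 1 - α) := by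
    have h1 : 2 / ((p : ℝ) - 1 - α) ≤ (k : ℝ) := by
      refine (Nat.le_ceil _).trans ?_
      have : (⌈2 / ((p : ℝ) - 1 - α)⌉₊ : ℝ) ≤ ((⌈2 / ((p : ℝ) - 1 - α)⌉₊ + 1 : ℕ) : ℝ) := by
        push_cast; linarith
      simpa [hkdef] using this
    calc (2 : ℝ) = (2 / ((p : ℝ) - 1 - α)) * ((p : ℝ) - 1 - α) := by field_simp
      _ ≤ (k : ℝ) * ((p : ℝ) - 1 - α) := mul_le_mul_of_nonneg_right h1 hd.le
  set a : ℕ → ℝ := fun n => Real.log (omegaCount p α n) with ha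
  have hωpos : ∀ n, (0 : ℝ) < (omegaCount p α n : ℝ) := fun n => by
    exact_mod_cast one_le_omegaCount hp hα hα' n
  have ha0 : ∀ n, 0 ≤ a n := fun n => log_nat_nonneg _
  have hamono : ∀ {i j : ℕ}, i ≤ j → a i ≤ a j := fun {i j} hij =>
    log_nat_le (omegaCount_mono hp hα hα' hij)
  have hatop : ∀ n, a n ≤ (n : ℝ) * Real.log p := by
    intro n
    have := log_nat_le (omegaCount_le_pow p α n)
    calc a n ≤ Real.log ((p : ℕ) ^ n : ℕ) := this
      _ = (n : ℝ) * Real.log p := by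
          push_cast
          rw [Real.log_pow]
  have hasuper : ∀ n m, a n + a m ≤ a (n + m + k) := by
    intro n m
    have h := omegaCount_superadd hp hα hk n m
    have := log_nat_le h
    rw [show ((omegaCount p α n * omegaCount p α m : ℕ) : ℝ)
        = (omegaCount p α n : ℝ) * (omegaCount p α m : ℝ) by push_cast; ring] at this
    rwa [Real.log_mul (hωpos n).ne' (hωpos m).ne'] at this
  set u : ℕ → ℝ := fun n => -(a (n - k)) with hu
  have homega0 : omegaCount p α 0 = 1 :=
    le_antisymm (by simpa using omegaCount_le_pow p α 0) (one_le_omegaCount hp hα hα' 0)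
  have ha00 : a 0 = 0 := by simp [ha, homega0]
  have hsub : Subadditive u := by
    intro m n
    have key : a (m - k) + a (n - k) ≤ a (m + n - k) := by
      rcases le_or_gt k m with hm | hm
      · rcases le_or_gt k n with hn | hn
        · have hidx : m + n - k = (m - k) + (n - k) + k := by omega
          rw [hidx]; exact hasuper _ _
        · rw [Nat.sub_eq_zero_of_le hn.le, ha00, add_zero]
          exact hamono (by omega)
      · rw [Nat.sub_eq_zero_of_le hm.le, ha00, zero_add]
        rcases le_or_gt k n with hn | hn
        · exact hamono (by omega)
        · rw [Nat.sub_eq_zero_of_le hn.le, ha00]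
          exact ha0 _
    simp only [hu]
    linarith
  have hbdd : BddBelow (Set.range fun n : ℕ => u n / n) := by
    refine ⟨-Real.log p, ?_⟩
    rintro x ⟨n, rfl⟩
    rcases Nat.eq_zero_or_pos n with rfl | hn
    · simp only [Nat.cast_zero, div_zero]
      linarith
    · have hnpos : (0 : ℝ) < n := by exact_mod_cast hn
      rw [le_div_iff₀ hnpos]
      simp only [hu]
      have h1 : a (n - k) ≤ (n : ℝ) * Real.log p := by
        refine (hatop _).trans ?_
        have h2 : ((n - k : ℕ) : ℝ) ≤ (n : ℝ) := by exact_mod_cast Nat.sub_le n k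
        nlinarith [hlogp.le]
      linarith
  have T := hsub.tendsto_lim hbdd
  set Λ := hsub.lim with hΛ
  have T1 := T.comp (tendsto_add_atTop_nat k)
  have T2 : Tendsto (fun n : ℕ => ((n : ℝ) + k) / n) atTop (𝓝 1) := by
    have h0 : Tendsto (fun n : ℕ => (k : ℝ) / n) atTop (𝓝 0) :=
      tendsto_const_div_atTop_nhds_zero_nat (k : ℝ)
    have h1 : Tendsto (fun n : ℕ => 1 + (k : ℝ) / n) atTop (𝓝 (1 + 0)) :=
      tendsto_const_nhds.add h0
    rw [add_zero] at h1
    refine h1.congr' ?_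
    filter_upwards [eventually_ge_atTop 1] with n hn
    have hn0 : (n : ℝ) ≠ 0 := by
      have : (0 : ℝ) < n := by exact_mod_cast hn
      exact this.ne'
    field_simp
  have T3 : Tendsto (fun n : ℕ =>
      -(((fun n : ℕ => u n / n) ∘ fun n : ℕ => n + k) n) * (((n : ℝ) + k) / n)) atTop
      (𝓝 (-Λ * 1)) := T1.neg.mul T2
  rw [mul_one] at T3
  have HT0 : Tendsto (fun n : ℕ => a n / (n : ℝ)) atTop (𝓝 (-Λ)) := by
    refine T3.congr' ?_
    filter_upwards [eventually_ge_atTop 1] with n hn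
    have hn0 : (n : ℝ) ≠ 0 := by
      have : (0 : ℝ) < n := by exact_mod_cast hn
      exact this.ne'
    have hnk0 : ((n + k : ℕ) : ℝ) ≠ 0 := by
      have : (0 : ℝ) < ((n + k : ℕ) : ℝ) := by exact_mod_cast Nat.lt_of_lt_of_le hn (Nat.le_add_right n k)
      exact this.ne'
    simp only [Function.comp_apply, hu, Nat.add_sub_cancel]
    push_cast
    field_simp
  have HT : Tendsto (fun n : ℕ => Real.log (omegaCount p α n) / ((n : ℝ) * Real.log p)) atTop
      (𝓝 (-Λ / Real.log p)) := by
    have h := HT0.div_const (Real.log p)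
    refine h.congr fun n => ?_
    rw [div_div]
  refine ⟨-Λ / Real.log p, ?_, ?_, HT⟩
  · refine ge_of_tendsto' HT fun n => ?_
    exact div_nonneg (ha0 n) (mul_nonneg (Nat.cast_nonneg n) hlogp.le)
  · refine le_of_tendsto HT ?_
    filter_upwards [eventually_ge_atTop 1] with n hn
    have hnpos : (0 : ℝ) < n := by exact_mod_cast hn
    rw [div_le_one (mul_pos hnpos hlogp)]
    simpa using hatop n

lemma sum_cast_eq {p n : ℕ} (w : Fin n → Fin p) :
    (∑ i, ((w i : ℕ) : ℝ)) = ((∑ i, ((w i : ℕ) : ℤ) : ℤ) : ℝ) := by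
  push_cast
  rfl

lemma omega_le_hcount {p : ℕ} {α δ : ℝ} (hα : 0 ≤ α) {n : ℕ} (hn : 1 ≤ δ * n) :
    omegaCount p α n ≤ hcount p n α δ := by
  have hδn : 0 < δ * n := lt_of_lt_of_le one_pos hn
  refine Nat.card_le_card_of_injective (fun x => ⟨x.1, ?_, ?_⟩) ?_
  · rw [sum_cast_eq, x.2]
    have h1 : α * (n : ℝ) - 1 < (⌊α * (n : ℝ)⌋ : ℝ) := Int.sub_one_lt_floor _
    nlinarith
  · rw [sum_cast_eq, x.2]
    have h1 : (⌊α * (n : ℝ)⌋ : ℝ) ≤ α * n := Int.floor_le _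
    nlinarith
  · intro x y hxy
    simp only [Subtype.mk.injEq] at hxy
    exact Subtype.ext hxy

lemma hcount_le_omega {p : ℕ} (hp : 2 ≤ p) {α δ β : ℝ} (hδ : 0 < δ)
    (hβ : 0 < β) (hβ1 : β ≤ α) (hβ2 : β ≤ (p : ℝ) - 1 - α) (n : ℕ) :
    hcount p n α δ ≤ omegaCount p α (n + ⌈(δ * n + 1) / β⌉₊) := by
  set k : ℕ := ⌈(δ * n + 1) / β⌉₊ with hkdef
  have hkβ : δ * n + 1 ≤ (k : ℝ) * β := by
    have h1 : (δ * n + 1) / β ≤ (k : ℝ) := Nat.le_ceil _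
    calc δ * n + 1 = ((δ * n + 1) / β) * β := by field_simp
      _ ≤ (k : ℝ) * β := mul_le_mul_of_nonneg_right h1 hβ.le
  set T : ℤ := ⌊α * ((n + k : ℕ) : ℝ)⌋ with hTdef
  have hcastnk : ((n + k : ℕ) : ℝ) = (n : ℝ) + k := by push_cast; ring
  have hkα : (k : ℝ) * β ≤ (k : ℝ) * α := mul_le_mul_of_nonneg_left hβ1 (Nat.cast_nonneg k)
  have hpad : ∀ w : {w : Fin n → Fin p //
      (n : ℝ) * (α - δ) < ∑ i, ((w i : ℕ) : ℝ) ∧ (∑ i, ((w i : ℕ) : ℝ)) < n * (α + δ)},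
      ∃ v : Fin k → Fin p, ∑ i, ((v i : ℕ) : ℤ) = T - ∑ i, ((w.1 i : ℕ) : ℤ) := by
    intro w
    set S : ℤ := ∑ i, ((w.1 i : ℕ) : ℤ) with hSdef
    have hS : (S : ℝ) = ∑ i, ((w.1 i : ℕ) : ℝ) := (sum_cast_eq w.1).symm
    have hw1 : (n : ℝ) * (α - δ) < (S : ℝ) := by rw [hS]; exact w.2.1
    have hw2 : (S : ℝ) < n * (α + δ) := by rw [hS]; exact w.2.2
    have hT1 : α * ((n : ℝ) + k) - 1 < (T : ℝ) := by
      rw [hTdef, hcastnk]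
      exact Int.sub_one_lt_floor _
    have hT2 : (T : ℝ) ≤ α * ((n : ℝ) + k) := by
      rw [hTdef, hcastnk]
      exact Int.floor_le _
    apply exists_word hp
    · have : (0 : ℝ) < (T : ℝ) - S := by nlinarith
      have h0 : (0 : ℤ) < T - S := by exact_mod_cast this
      omega
    · have hcast2 : ((((p : ℤ) - 1) * k : ℤ) : ℝ) = ((p : ℝ) - 1) * k := by push_cast; ring
      have : ((T - S : ℤ) : ℝ) < ((((p : ℤ) - 1) * k : ℤ) : ℝ) := by
        rw [hcast2]
        push_cast
        nlinarith
      have h1 : T - S < ((p : ℤ) - 1) * k := by exact_mod_cast this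
      omega
  refine Nat.card_le_card_of_injective
    (fun w => ⟨Fin.append w.1 (hpad w).choose, ?_⟩) ?_
  · rw [Fin.sum_univ_add]
    simp only [Fin.append_left, Fin.append_right]
    rw [(hpad _).choose_spec]
    ring
  · intro x y hxy
    simp only [Subtype.mk.injEq] at hxy
    apply Subtype.ext
    funext i
    have := congrFun hxy (Fin.castAdd k i)
    simpa [Fin.append_left] using this

lemma omegaCount_of_zero {p : ℕ} (hp : 2 ≤ p) (n : ℕ) : omegaCount p 0 n = 1 := by
  rw [omegaCount]
  have hppos : 0 < p := by omega
  have hfl : ⌊(0 : ℝ) * (n : ℝ)⌋ = 0 := by norm_num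
  rw [Nat.card_eq_one_iff_unique]
  constructor
  · constructor
    rintro ⟨w, hw⟩ ⟨v, hv⟩
    rw [hfl] at hw hv
    have hz : ∀ (u : Fin n → Fin p), (∑ i, ((u i : ℕ) : ℤ)) = 0 → ∀ i, u i = ⟨0, hppos⟩ := by
      intro u hu i
      have := (Finset.sum_eq_zero_iff_of_nonneg
        (fun j _ => Int.natCast_nonneg (u j : ℕ))).mp hu i (Finset.mem_univ i)
      have : (u i : ℕ) = 0 := by exact_mod_cast this
      exact Fin.ext this
    apply Subtype.ext
    show w = v
    funext i
    rw [hz w hw i, hz v hv i]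
  · exact ⟨⟨fun _ => ⟨0, hppos⟩, by simp [hfl]⟩⟩

lemma omegaCount_of_top {p : ℕ} (hp : 2 ≤ p) (n : ℕ) :
    omegaCount p ((p : ℝ) - 1) n = 1 := by
  rw [omegaCount]
  have hppos : 0 < p := by omega
  have hfl : ⌊((p : ℝ) - 1) * (n : ℝ)⌋ = ((p : ℤ) - 1) * n := by
    rw [show ((p : ℝ) - 1) * (n : ℝ) = ((((p : ℤ) - 1) * n : ℤ) : ℝ) by push_cast; ring,
      Int.floor_intCast]
  have hlt : p - 1 < p := by omega
  rw [Nat.card_eq_one_iff_unique]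
  constructor
  · constructor
    rintro ⟨w, hw⟩ ⟨v, hv⟩
    rw [hfl] at hw hv
    have hz : ∀ (u : Fin n → Fin p), (∑ i, ((u i : ℕ) : ℤ)) = ((p : ℤ) - 1) * n →
        ∀ i, u i = ⟨p - 1, hlt⟩ := by
      intro u hu i
      have hsum : (∑ i, (((p : ℤ) - 1) - ((u i : ℕ) : ℤ))) = 0 := by
        rw [Finset.sum_sub_distrib, hu, Finset.sum_const, Finset.card_univ, Fintype.card_fin]
        ring
      have hterm := (Finset.sum_eq_zero_iff_of_nonneg
        (fun j _ => by
          have : ((u j : ℕ) : ℤ) ≤ (p : ℤ) - 1 := by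
            have := (u j).2
            omega
          omega)).mp hsum i (Finset.mem_univ i)
      apply Fin.ext
      show (u i : ℕ) = p - 1
      omega
    apply Subtype.ext
    show w = v
    funext i
    rw [hz w hw i, hz v hv i]
  · refine ⟨⟨fun _ => ⟨p - 1, hlt⟩, ?_⟩⟩
    rw [hfl]
    simp only [Finset.sum_const, Finset.card_univ, Fintype.card_fin, nsmul_eq_mul]
    push_cast [Nat.cast_sub (by omega : 1 ≤ p)]
    ring

lemma card_reflect_le {p n : ℕ} (hp : 2 ≤ p) {δ : ℝ} :
    Nat.card {w : Fin n → Fin p // (n : ℝ) * (((p : ℝ) - 1) - δ) < ∑ i, ((w i : ℕ) : ℝ)}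
      ≤ Nat.card {w : Fin n → Fin p // (∑ i, ((w i : ℕ) : ℝ)) < n * δ} := by
  have hrev : ∀ (x : Fin p), (((Fin.rev x : Fin p) : ℕ) : ℝ) = (p : ℝ) - 1 - ((x : ℕ) : ℝ) := by
    intro x
    rw [Fin.val_rev]
    have hx : (x : ℕ) + 1 ≤ p := x.2
    push_cast [Nat.cast_sub hx]
    ring
  refine Nat.card_le_card_of_injective (fun x => ⟨fun i => Fin.rev (x.1 i), ?_⟩) ?_
  · have hsum : (∑ i, (((Fin.rev (x.1 i) : Fin p) : ℕ) : ℝ))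
        = (n : ℝ) * ((p : ℝ) - 1) - ∑ i, ((x.1 i : ℕ) : ℝ) := by
      rw [show (∑ i, (((Fin.rev (x.1 i) : Fin p) : ℕ) : ℝ))
          = ∑ i, ((p : ℝ) - 1 - ((x.1 i : ℕ) : ℝ)) from Finset.sum_congr rfl fun i _ => hrev _,
        Finset.sum_sub_distrib, Finset.sum_const, Finset.card_univ, Fintype.card_fin,
        nsmul_eq_mul]
    rw [hsum]
    have := x.2
    nlinarith [x.2]
  · intro x y hxy
    simp only [Subtype.mk.injEq] at hxy
    apply Subtype.ext
    funext i
    exact Fin.rev_injective (congrFun hxy i)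

set_option maxHeartbeats 1000000 in
lemma chernoff {p : ℕ} (hp : 2 ≤ p) {n : ℕ} (hn : 1 ≤ n) {δ : ℝ} (hδ : 0 < δ) (hδ1 : δ ≤ 1) :
    Real.log (Nat.card {w : Fin n → Fin p // (∑ i, ((w i : ℕ) : ℝ)) < n * δ})
      ≤ n * (δ * Real.log (1 / δ) + ((p : ℝ) - 1) * δ) := by
  classical
  have hppos : 0 < p := by omega
  set t : ℝ := 1 / δ with ht
  have htpos : 0 < t := by positivity
  have ht1 : 1 ≤ t := by
    rw [ht, le_div_iff₀ hδ]
    linarith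
  have hδt : δ = t⁻¹ := by
    rw [ht]
    field_simp
  set B : ℝ := ∑ x : Fin p, δ ^ (x : ℕ) with hB
  have hBle : B ≤ 1 + ((p : ℝ) - 1) * δ := by
    rw [hB, Fin.sum_univ_eq_sum_range (fun j => δ ^ j) p]
    obtain ⟨m, rfl⟩ : ∃ m, p = m + 1 := ⟨p - 1, by omega⟩
    rw [Finset.sum_range_succ']
    have hsum : (∑ i ∈ Finset.range m, δ ^ (i + 1)) ≤ (m : ℝ) * δ := by
      have hb : ∀ i ∈ Finset.range m, δ ^ (i + 1) ≤ δ := by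
        intro i _
        calc δ ^ (i + 1) = δ ^ i * δ := by ring
          _ ≤ 1 * δ := by
              have := pow_le_one₀ hδ.le hδ1 (n := i)
              nlinarith
          _ = δ := one_mul δ
      calc (∑ i ∈ Finset.range m, δ ^ (i + 1)) ≤ ∑ _i ∈ Finset.range m, δ :=
            Finset.sum_le_sum hb
        _ = (m : ℝ) * δ := by rw [Finset.sum_const, Finset.card_range, nsmul_eq_mul]
    push_cast
    simp only [pow_zero]
    linarith
  have hB1 : 1 ≤ B := by
    rw [hB]
    have := Finset.single_le_sum (f := fun x : Fin p => δ ^ (x : ℕ))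
      (fun x _ => by positivity) (Finset.mem_univ (⟨0, hppos⟩ : Fin p))
    simpa using this
  have hBpos : 0 < B := lt_of_lt_of_le one_pos hB1
  set Sset := Finset.univ.filter (fun w : Fin n → Fin p => (∑ i, ((w i : ℕ) : ℝ)) < n * δ)
    with hSs
  have hcard : Nat.card {w : Fin n → Fin p // (∑ i, ((w i : ℕ) : ℝ)) < n * δ} = Sset.card := by
    rw [Nat.card_eq_fintype_card, Fintype.card_subtype]
  have hpowe : ∀ S : ℕ, δ ^ S = t ^ (-(S : ℝ)) := by
    intro S
    calc δ ^ S = (t⁻¹) ^ S := by rw [← hδt]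
      _ = (t ^ S)⁻¹ := by rw [inv_pow]
      _ = (t ^ (S : ℝ))⁻¹ := by rw [Real.rpow_natCast]
      _ = t ^ (-(S : ℝ)) := (Real.rpow_neg htpos.le _).symm
  have hterm : ∀ w ∈ Sset, (1 : ℝ) ≤ t ^ ((n : ℝ) * δ) * δ ^ (∑ i, ((w i : ℕ))) := by
    intro w hw
    have hwlt : (∑ i, ((w i : ℕ) : ℝ)) < n * δ := (Finset.mem_filter.mp hw).2
    have hcast : (∑ i, ((w i : ℕ) : ℝ)) = ((∑ i, (w i : ℕ) : ℕ) : ℝ) := by push_cast; rfl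
    rw [hpowe, ← Real.rpow_add htpos, ← Real.rpow_zero t]
    apply Real.rpow_le_rpow_of_exponent_le ht1
    rw [hcast] at hwlt
    linarith
  have hkey : ((Sset.card : ℕ) : ℝ) ≤ t ^ ((n : ℝ) * δ) * B ^ n := by
    have h1 : ((Sset.card : ℕ) : ℝ) = ∑ _w ∈ Sset, (1 : ℝ) := by
      rw [Finset.sum_const, nsmul_eq_mul, mul_one]
    rw [h1]
    calc (∑ _w ∈ Sset, (1 : ℝ)) ≤ ∑ w ∈ Sset, t ^ ((n : ℝ) * δ) * δ ^ (∑ i, ((w i : ℕ))) :=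
          Finset.sum_le_sum hterm
      _ ≤ ∑ w : Fin n → Fin p, t ^ ((n : ℝ) * δ) * δ ^ (∑ i, ((w i : ℕ))) := by
          refine Finset.sum_le_sum_of_subset_of_nonneg (Finset.filter_subset _ _) ?_
          intro w _ _
          positivity
      _ = t ^ ((n : ℝ) * δ) * ∑ w : Fin n → Fin p, δ ^ (∑ i, ((w i : ℕ))) := by
          rw [Finset.mul_sum]
      _ = t ^ ((n : ℝ) * δ) * B ^ n := by
          congr 1
          calc (∑ w : Fin n → Fin p, δ ^ (∑ i, ((w i : ℕ))))
              = ∑ w : Fin n → Fin p, ∏ i, δ ^ ((w i : ℕ)) := by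
                refine Finset.sum_congr rfl fun w _ => ?_
                rw [← Finset.prod_pow_eq_pow_sum]
            _ = ∏ _i : Fin n, ∑ x : Fin p, δ ^ ((x : ℕ)) := by
                rw [Finset.prod_univ_sum, Fintype.piFinset_univ]
            _ = B ^ n := by
                simp [Finset.prod_const, hB]
  rw [hcard]
  have hn0 : (0 : ℝ) < (n : ℝ) := by exact_mod_cast hn
  have hc1 : (1 : ℝ) ≤ Sset.card := by
    have hmem : (fun _ : Fin n => (⟨0, hppos⟩ : Fin p)) ∈ Sset := by
      rw [hSs, Finset.mem_filter]
      refine ⟨Finset.mem_univ _, ?_⟩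
      simpa using mul_pos hn0 hδ
    have := Finset.card_pos.mpr ⟨_, hmem⟩
    exact_mod_cast this
  calc Real.log Sset.card ≤ Real.log (t ^ ((n : ℝ) * δ) * B ^ n) :=
        Real.log_le_log (by linarith) hkey
    _ = (n : ℝ) * δ * Real.log t + (n : ℝ) * Real.log B := by
        rw [Real.log_mul (Real.rpow_pos_of_pos htpos _).ne' (pow_pos hBpos n).ne',
          Real.log_rpow htpos, Real.log_pow]
    _ ≤ (n : ℝ) * (δ * Real.log (1 / δ) + ((p : ℝ) - 1) * δ) := by
        have hlogB : Real.log B ≤ ((p : ℝ) - 1) * δ := by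
          have := Real.log_le_sub_one_of_pos hBpos
          linarith
        have hlogt : 0 ≤ Real.log t := Real.log_nonneg ht1
        rw [ht]
        nlinarith

lemma hcount_le_pow (p n : ℕ) (α δ : ℝ) : hcount p n α δ ≤ p ^ n :=
  card_subtype_le_pow _

lemma div_log_nonneg {p : ℕ} (hp : 2 ≤ p) (m n : ℕ) :
    0 ≤ Real.log m / ((n : ℝ) * Real.log p) := by
  have hlogp : 0 ≤ Real.log p := Real.log_nonneg (by exact_mod_cast (by omega : 1 ≤ p))
  exact div_nonneg (log_nat_nonneg m) (mul_nonneg (Nat.cast_nonneg n) hlogp)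

lemma div_log_le_one {p : ℕ} (hp : 2 ≤ p) {m n : ℕ} (hm : m ≤ p ^ n) :
    Real.log m / ((n : ℝ) * Real.log p) ≤ 1 := by
  have hp1 : (1 : ℝ) < p := by exact_mod_cast (by omega : 1 < p)
  have hlogp : 0 < Real.log p := Real.log_pos hp1
  rcases Nat.eq_zero_or_pos n with rfl | hn
  · have hm1 : m = 0 ∨ m = 1 := by
      have : m ≤ 1 := by simpa using hm
      omega
    rcases hm1 with rfl | rfl <;> simp
  · have hnpos : (0 : ℝ) < n := by exact_mod_cast hn
    rw [div_le_one (mul_pos hnpos hlogp)]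
    calc Real.log m ≤ Real.log ((p ^ n : ℕ)) := log_nat_le hm
      _ = (n : ℝ) * Real.log p := by push_cast; rw [Real.log_pow]

lemma entropy_eq_zero_of_small {p : ℕ} (hp : 2 ≤ p) {α : ℝ}
    (hsmall : ∀ δ : ℝ, 0 < δ → δ ≤ 1 → ∀ n : ℕ, 1 ≤ n →
      hcount p n α δ ≤ Nat.card {w : Fin n → Fin p // (∑ i, ((w i : ℕ) : ℝ)) < n * δ}) :
    entropy p α = 0 := by
  have hp1 : (1 : ℝ) < p := by exact_mod_cast (by omega : 1 < p)
  have hlogp : 0 < Real.log p := Real.log_pos hp1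
  have Hge0 : ∀ (δ : ℝ) (n : ℕ), 0 ≤ Real.log (hcount p n α δ) / ((n : ℝ) * Real.log p) :=
    fun δ n => div_log_nonneg hp _ n
  have Hle1 : ∀ (δ : ℝ) (n : ℕ), Real.log (hcount p n α δ) / ((n : ℝ) * Real.log p) ≤ 1 :=
    fun δ n => div_log_le_one hp (hcount_le_pow p n α δ)
  have cobH : ∀ δ : ℝ, IsCoboundedUnder (· ≤ ·) atTop
      (fun n : ℕ => Real.log (hcount p n α δ) / ((n : ℝ) * Real.log p)) :=
    fun δ => isCoboundedUnder_le_of_le atTop (fun n => Hge0 δ n)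
  have boundH : ∀ δ : ℝ, IsBoundedUnder (· ≤ ·) atTop
      (fun n : ℕ => Real.log (hcount p n α δ) / ((n : ℝ) * Real.log p)) :=
    fun δ => isBoundedUnder_of ⟨1, fun n => Hle1 δ n⟩
  have limsup_nonneg : ∀ δ : ℝ, 0 ≤ limsup
      (fun n : ℕ => Real.log (hcount p n α δ) / ((n : ℝ) * Real.log p)) atTop := by
    intro δ
    refine le_limsup_of_le (boundH δ) fun b hb => ?_
    obtain ⟨n, hn⟩ := hb.exists
    exact (Hge0 δ n).trans hn
  have hbddE : BddBelow (Set.range fun δ : {δ : ℝ // 0 < δ} => limsup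
      (fun n : ℕ => Real.log (hcount p n α δ) / ((n : ℝ) * Real.log p)) atTop) := by
    refine ⟨0, ?_⟩
    rintro x ⟨δ, rfl⟩
    exact limsup_nonneg _
  refine le_antisymm ?_ (le_ciInf fun δ => limsup_nonneg δ.1)
  refine le_of_forall_pos_le_add fun ε hε => ?_
  have T : Tendsto (fun x : ℝ => (x * Real.exp (-x) + ((p : ℝ) - 1) * Real.exp (-x)) / Real.log p)
      atTop (𝓝 0) := by
    have t1 : Tendsto (fun x : ℝ => x * Real.exp (-x)) atTop (𝓝 0) := by
      simpa using Real.tendsto_pow_mul_exp_neg_atTop_nhds_zero 1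
    have t2 : Tendsto (fun x : ℝ => ((p : ℝ) - 1) * Real.exp (-x)) atTop (𝓝 (((p : ℝ) - 1) * 0)) :=
      Real.tendsto_exp_neg_atTop_nhds_zero.const_mul _
    have := (t1.add t2).div_const (Real.log p)
    simpa using this
  obtain ⟨x, hx0, hxε⟩ : ∃ x : ℝ, 0 ≤ x ∧
      (x * Real.exp (-x) + ((p : ℝ) - 1) * Real.exp (-x)) / Real.log p < ε :=
    ((eventually_ge_atTop (0 : ℝ)).and (T.eventually_lt_const hε)).exists
  set δ := Real.exp (-x) with hδdef
  have hδ0 : 0 < δ := Real.exp_pos _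
  have hδ1 : δ ≤ 1 := Real.exp_le_one_iff.mpr (by linarith)
  have hlog : Real.log (1 / δ) = x := by
    rw [one_div, Real.log_inv, hδdef, Real.log_exp, neg_neg]
  have hBd : limsup (fun n : ℕ => Real.log (hcount p n α δ) / ((n : ℝ) * Real.log p)) atTop
      ≤ (x * δ + ((p : ℝ) - 1) * δ) / Real.log p := by
    refine limsup_le_of_le (cobH δ) ?_
    filter_upwards [eventually_ge_atTop 1] with n hn
    have h1 := hsmall δ hδ0 hδ1 n hn
    have h2 := chernoff hp hn hδ0 hδ1
    have h3 : Real.log (hcount p n α δ) ≤ (n : ℝ) * (δ * x + ((p : ℝ) - 1) * δ) := by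
      refine (log_nat_le h1).trans ?_
      rw [hlog] at h2
      exact h2
    have hnpos : (0 : ℝ) < n := by exact_mod_cast hn
    rw [div_le_div_iff₀ (mul_pos hnpos hlogp) hlogp]
    nlinarith [mul_le_mul_of_nonneg_right h3 hlogp.le]
  calc entropy p α ≤ limsup (fun n : ℕ => Real.log (hcount p n α δ) / ((n : ℝ) * Real.log p)) atTop := ciInf_le hbddE ⟨δ, hδ0⟩
    _ ≤ (x * δ + ((p : ℝ) - 1) * δ) / Real.log p := hBd
    _ ≤ 0 + ε := by
        rw [zero_add]
        refine le_of_lt ?_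
        calc (x * δ + ((p : ℝ) - 1) * δ) / Real.log p
            = (x * Real.exp (-x) + ((p : ℝ) - 1) * Real.exp (-x)) / Real.log p := by rw [hδdef]
          _ < ε := hxε

end PadicAux
end

/-- For an integer `p ≥ 2` and `0 ≤ α ≤ p-1`,
`lim_{n→∞} log card W([αn],n) / (n log p) = h(α)`. -/
theorem tendsto_log_omegaCount (p : ℕ) (hp : 2 ≤ p) (α : ℝ)
    (hα : 0 ≤ α) (hα' : α ≤ (p : ℝ) - 1) :
    Tendsto (fun n : ℕ => Real.log (omegaCount p α n) / (n * Real.log p)) atTop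
      (nhds (entropy p α)) := by
  have hp1 : (1 : ℝ) < p := by exact_mod_cast (by omega : 1 < p)
  have hlogp : 0 < Real.log p := Real.log_pos hp1
  have Hge0 : ∀ (δ : ℝ) (n : ℕ), 0 ≤ Real.log (hcount p n α δ) / ((n : ℝ) * Real.log p) :=
    fun δ n => PadicAux.div_log_nonneg hp _ n
  have Hle1 : ∀ (δ : ℝ) (n : ℕ), Real.log (hcount p n α δ) / ((n : ℝ) * Real.log p) ≤ 1 :=
    fun δ n => PadicAux.div_log_le_one hp (PadicAux.hcount_le_pow p n α δ)
  have cobH : ∀ δ : ℝ, IsCoboundedUnder (· ≤ ·) atTop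
      (fun n : ℕ => Real.log (hcount p n α δ) / ((n : ℝ) * Real.log p)) :=
    fun δ => isCoboundedUnder_le_of_le atTop (fun n => Hge0 δ n)
  have boundH : ∀ δ : ℝ, IsBoundedUnder (· ≤ ·) atTop
      (fun n : ℕ => Real.log (hcount p n α δ) / ((n : ℝ) * Real.log p)) :=
    fun δ => isBoundedUnder_of ⟨1, fun n => Hle1 δ n⟩
  have limsup_nonneg : ∀ δ : ℝ, 0 ≤ limsup
      (fun n : ℕ => Real.log (hcount p n α δ) / ((n : ℝ) * Real.log p)) atTop := by
    intro δ
    refine le_limsup_of_le (boundH δ) fun b hb => ?_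
    obtain ⟨n, hn⟩ := hb.exists
    exact (Hge0 δ n).trans hn
  have hbddE : BddBelow (Set.range fun δ : {δ : ℝ // 0 < δ} => limsup
      (fun n : ℕ => Real.log (hcount p n α δ) / ((n : ℝ) * Real.log p)) atTop) := by
    refine ⟨0, ?_⟩
    rintro x ⟨δ, rfl⟩
    exact limsup_nonneg _
  by_cases h0 : α = 0
  · subst h0
    have hent : entropy p 0 = 0 := by
      refine PadicAux.entropy_eq_zero_of_small hp ?_
      intro δ hδ hδ1 n hn
      refine PadicAux.card_le_of_imp fun w hw => ?_
      have h2 := hw.2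
      rwa [zero_add] at h2
    rw [hent]
    have heq : (fun n : ℕ => Real.log (omegaCount p 0 n) / (n * Real.log p))
        = fun _ : ℕ => (0 : ℝ) := by
      funext n
      rw [PadicAux.omegaCount_of_zero hp n]
      simp
    rw [heq]
    exact tendsto_const_nhds
  by_cases h1 : α = (p : ℝ) - 1
  · subst h1
    have hent : entropy p ((p : ℝ) - 1) = 0 := by
      refine PadicAux.entropy_eq_zero_of_small hp ?_
      intro δ hδ hδ1 n hn
      calc hcount p n ((p : ℝ) - 1) δ
          ≤ Nat.card {w : Fin n → Fin p //
              (n : ℝ) * (((p : ℝ) - 1) - δ) < ∑ i, ((w i : ℕ) : ℝ)} :=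
            PadicAux.card_le_of_imp fun w hw => hw.1
        _ ≤ _ := PadicAux.card_reflect_le hp
    rw [hent]
    have heq : (fun n : ℕ => Real.log (omegaCount p ((p : ℝ) - 1) n) / (n * Real.log p))
        = fun _ : ℕ => (0 : ℝ) := by
      funext n
      rw [PadicAux.omegaCount_of_top hp n]
      simp
    rw [heq]
    exact tendsto_const_nhds
  -- interior case
  have hα0 : 0 < α := lt_of_le_of_ne hα (Ne.symm h0)
  have hlt : α < (p : ℝ) - 1 := lt_of_le_of_ne hα' h1
  obtain ⟨C, hC0, hC1, hCt⟩ := PadicAux.omega_tendsto hp hα hα' hlt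
  have hEC : entropy p α = C := by
    refine le_antisymm ?_ ?_
    · -- entropy ≤ C
      refine le_of_forall_pos_le_add fun ε hε => ?_
      set ε' : ℝ := min ε 1 with hε'def
      have hε'0 : 0 < ε' := lt_min hε one_pos
      have hε'1 : ε' ≤ 1 := min_le_right _ _
      have hε'ε : ε' ≤ ε := min_le_left _ _
      set β : ℝ := min α ((p : ℝ) - 1 - α) with hβdef
      have hβ0 : 0 < β := lt_min hα0 (by linarith)
      have hβ1 : β ≤ α := min_le_left _ _
      have hβ2 : β ≤ (p : ℝ) - 1 - α := min_le_right _ _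
      set δ : ℝ := β * ε' / 8 with hδdef
      have hδ0 : 0 < δ := by positivity
      have hkey : ∀ n : ℕ, hcount p n α δ ≤ omegaCount p α (n + ⌈(δ * n + 1) / β⌉₊) :=
        fun n => PadicAux.hcount_le_omega hp hδ0 hβ0 hβ1 hβ2 n
      obtain ⟨M, hM⟩ : ∃ M : ℕ, ∀ m ≥ M,
          Real.log (omegaCount p α m) / ((m : ℝ) * Real.log p) ≤ C + ε' / 8 :=
        eventually_atTop.mp (hCt.eventually_le_const (show C < C + ε' / 8 by linarith))
      have hδβ : δ / β = ε' / 8 := by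
        rw [hδdef]
        field_simp
      have hratio : ∀ᶠ n : ℕ in atTop,
          ((n : ℝ) + (⌈(δ * (n : ℝ) + 1) / β⌉₊ : ℝ)) / n ≤ 1 + ε' / 4 := by
        have hT : Tendsto (fun n : ℕ => ((1 : ℝ) / β + 1) / n) atTop (nhds 0) :=
          tendsto_const_div_atTop_nhds_zero_nat _
        filter_upwards [eventually_ge_atTop 1,
          hT.eventually_le_const (show (0 : ℝ) < ε' / 8 by linarith)] with n hn hTn
        have hnpos : (0 : ℝ) < n := by exact_mod_cast hn
        have hceil : (⌈(δ * (n : ℝ) + 1) / β⌉₊ : ℝ) < (δ * (n : ℝ) + 1) / β + 1 :=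
          Nat.ceil_lt_add_one (by positivity)
        have e1 : (δ * (n : ℝ) + 1) / β = (ε' / 8) * n + 1 / β := by
          rw [add_div, one_div, mul_comm δ (n : ℝ), mul_div_assoc, hδβ]
          ring
        have hTn' : (1 : ℝ) / β + 1 ≤ (ε' / 8) * n := by
          rw [div_le_iff₀ hnpos] at hTn
          linarith
        have hceil2 : (⌈(δ * (n : ℝ) + 1) / β⌉₊ : ℝ) < (ε' / 8) * n + 1 / β + 1 := by
          rw [show (ε' / 8) * (n : ℝ) + 1 / β + 1 = ((δ * (n : ℝ) + 1) / β) + 1 by rw [e1]]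
          exact hceil
        rw [div_le_iff₀ hnpos]
        linarith
      have hev : ∀ᶠ n : ℕ in atTop,
          Real.log (hcount p n α δ) / ((n : ℝ) * Real.log p) ≤ (C + ε' / 8) * (1 + ε' / 4) := by
        filter_upwards [eventually_ge_atTop 1, eventually_ge_atTop M, hratio] with n hn1 hnM hrat
        have hnpos : (0 : ℝ) < n := by exact_mod_cast hn1
        set k : ℕ := ⌈(δ * (n : ℝ) + 1) / β⌉₊ with hkdef
        set m : ℕ := n + k with hmdef
        have hmM : M ≤ m := le_trans hnM (Nat.le_add_right n k)
        have hmpos : (0 : ℝ) < ((m : ℕ) : ℝ) := by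
          have : (0 : ℕ) < m := by omega
          exact_mod_cast this
        have step1 : Real.log (hcount p n α δ) ≤ Real.log (omegaCount p α m) :=
          PadicAux.log_nat_le (hkey n)
        have step2 : Real.log (hcount p n α δ) / ((n : ℝ) * Real.log p)
            ≤ Real.log (omegaCount p α m) / ((n : ℝ) * Real.log p) :=
          div_le_div_of_nonneg_right step1 (by positivity)
        have identity : Real.log (omegaCount p α m) / ((n : ℝ) * Real.log p)
            = (Real.log (omegaCount p α m) / (((m : ℕ) : ℝ) * Real.log p)) * (((m : ℕ) : ℝ) / n) := by
          field_simp
        have hcastm : ((m : ℕ) : ℝ) = (n : ℝ) + (k : ℝ) := by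
          rw [hmdef]
          push_cast
          ring
        have step3 : (Real.log (omegaCount p α m) / (((m : ℕ) : ℝ) * Real.log p)) * (((m : ℕ) : ℝ) / n)
            ≤ (C + ε' / 8) * (1 + ε' / 4) := by
          refine mul_le_mul (hM m hmM) ?_ (by positivity) (by linarith)
          rw [hcastm]
          exact hrat
        calc Real.log (hcount p n α δ) / ((n : ℝ) * Real.log p)
            ≤ Real.log (omegaCount p α m) / ((n : ℝ) * Real.log p) := step2
          _ = _ := identity
          _ ≤ (C + ε' / 8) * (1 + ε' / 4) := step3
      have hlim : limsup (fun n : ℕ => Real.log (hcount p n α δ) / ((n : ℝ) * Real.log p)) atTop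
          ≤ (C + ε' / 8) * (1 + ε' / 4) := limsup_le_of_le (cobH δ) hev
      calc entropy p α
          ≤ limsup (fun n : ℕ => Real.log (hcount p n α δ) / ((n : ℝ) * Real.log p)) atTop :=
            ciInf_le hbddE ⟨δ, hδ0⟩
        _ ≤ (C + ε' / 8) * (1 + ε' / 4) := hlim
        _ ≤ C + ε := by nlinarith
    · -- C ≤ entropy
      refine le_ciInf fun δ => ?_
      have hLlim : limsup
          (fun n : ℕ => Real.log (omegaCount p α n) / ((n : ℝ) * Real.log p)) atTop = C :=
        hCt.limsup_eq
      rw [← hLlim]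
      refine limsup_le_limsup ?_
        (isCoboundedUnder_le_of_le atTop (fun n => PadicAux.div_log_nonneg hp _ n))
        (boundH δ.1)
      filter_upwards [eventually_ge_atTop (⌈1 / δ.1⌉₊ + 1)] with n hn
      have hn1 : 1 ≤ n := le_trans (Nat.le_add_left 1 _) hn
      have hnpos : (0 : ℝ) < n := by exact_mod_cast hn1
      have hδn : 1 ≤ δ.1 * n := by
        have hc : ((⌈1 / δ.1⌉₊ + 1 : ℕ) : ℝ) ≤ (n : ℝ) := by exact_mod_cast hn
        have hc2 : 1 / δ.1 ≤ (n : ℝ) := by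
          refine (Nat.le_ceil _).trans ?_
          push_cast at hc ⊢
          linarith
        rw [div_le_iff₀ δ.2] at hc2
        linarith
      have hcount_ge := PadicAux.omega_le_hcount (p := p) hα hδn
      have hlog := PadicAux.log_nat_le hcount_ge
      exact div_le_div_of_nonneg_right hlog (by positivity)
  rw [hEC]
  exact hCt
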